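/- Cohen forcing cannot specialize a nonspecial tree: if T is a nonspecial tree of height ω₁ and λ is any cardinal, then Add(ω,λ) forces that T is nonspecial. -/

import Mathlib

/-- The Cohen forcing `Add(ω, λ)` (with index set `ι` of size `λ`): finite partial
functions from `ι × ℕ` to `2`, ordered by reverse inclusion (stronger = larger). -/
def Cohen (ι : Type*) : Type _ :=
  {f : ι × ℕ → Option Bool // {x | f x ≠ none}.Finite}

instance (ι : Type*) : Preorder (Cohen ι) where
  le q p := ∀ x b, p.1 x = some b → q.1 x = some b
  le_refl := by intro a x b h; exact h
  le_trans := by intro a b c hab hbc x v h; exact hab x v (hbc x v h)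


section SpecialIdeal

variable {T : Type*} [PartialOrder T]

/-- A subset of a tree is *special* if there is a map to `ℕ` injective on chains. -/
def SpecialOn (A : Set T) : Prop :=
  ∃ g : T → ℕ, ∀ s ∈ A, ∀ t ∈ A, s < t → g s ≠ g t

theorem specialOn_mono {A B : Set T} (h : A ⊆ B) (hB : SpecialOn B) : SpecialOn A := by
  obtain ⟨g, hg⟩ := hB
  exact ⟨g, fun s hs t ht => hg s (h hs) t (h ht)⟩

theorem specialOn_union {A B : Set T} (hA : SpecialOn A) (hB : SpecialOn B) :
    SpecialOn (A ∪ B) := by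
  classical
  obtain ⟨g, hg⟩ := hA
  obtain ⟨h, hh⟩ := hB
  refine ⟨fun t => if t ∈ A then 2 * g t else 2 * h t + 1, ?_⟩
  intro s hs t ht hlt heq
  by_cases hsA : s ∈ A <;> by_cases htA : t ∈ A <;> simp only [hsA, htA, if_pos, if_true,
    if_false, if_neg, not_false_iff] at heq
  · exact hg s hsA t htA hlt (by omega)
  · omega
  · omega
  · exact hh s (hs.resolve_left hsA) t (ht.resolve_left htA) hlt (by omega)

theorem specialOn_empty_or (A : Set T) (hno : ∀ s ∈ A, ∀ t ∈ A, ¬ s < t) : SpecialOn A :=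
  ⟨fun _ => 0, fun s hs t ht hlt _ => hno s hs t ht hlt⟩

/-- Countable pigeonhole for nonspecial sets. -/
theorem pigeonhole_nonspecial {S : Set T} (hS : ¬ SpecialOn S) (c : T → ℕ) :
    ∃ n, ¬ SpecialOn {t | t ∈ S ∧ c t = n} := by
  by_contra h
  push_neg at h
  choose g hg using h
  apply hS
  refine ⟨fun t => Nat.pair (c t) (g (c t) t), ?_⟩
  intro s hs t ht hlt heq
  obtain ⟨h1, h2⟩ := Nat.pair_eq_pair.mp heq
  exact hg (c t) s ⟨hs, h1⟩ t ⟨ht, rfl⟩ hlt (by rw [h1] at h2; exact h2)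

theorem nonempty_of_not_specialOn {S : Set T} (hS : ¬ SpecialOn S) : S.Nonempty := by
  by_contra h
  rw [Set.not_nonempty_iff_eq_empty] at h
  exact hS ⟨fun _ => 0, by simp [h]⟩

theorem wf_of_iio (hwo : ∀ t : T, IsChain (· ≤ ·) (Set.Iio t) ∧ (Set.Iio t).IsWF) :
    WellFounded ((· < ·) : T → T → Prop) := by
  constructor
  intro t
  constructor
  intro s hst
  have key : ∀ x ∈ Set.Iio t, Acc ((· < ·) : T → T → Prop) x := by
    intro x hx
    refine Set.WellFoundedOn.induction (hwo t).2 hx ?_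
    intro y hy ih
    exact Acc.intro y fun z hz => ih z (lt_trans hz hy) hz
  exact key s hst

/-- Pressing Down Lemma for nonspecial sets: a regressive map (defined on the
non-minimal part of `S`) is constant on a nonspecial set. -/
theorem pdl (hwo : ∀ t : T, IsChain (· ≤ ·) (Set.Iio t) ∧ (Set.Iio t).IsWF)
    {S : Set T} (f : T → T)
    (hf : ∀ t, (t ∈ S ∧ ∃ s ∈ S, s < t) → f t ∈ S ∧ f t < t)
    (hS : ¬ SpecialOn S) :
    ∃ u, ¬ SpecialOn {t | (t ∈ S ∧ ∃ s ∈ S, s < t) ∧ f t = u} := by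
  classical
  by_contra h
  push_neg at h
  choose g hg using h
  have wf := wf_of_iio hwo
  set S' : Set T := {t | t ∈ S ∧ ∃ s ∈ S, s < t} with hS'def
  let code : T → List ℕ :=
    wf.fix (C := fun _ => List ℕ)
      (fun t ih => if ht : t ∈ S' then g (f t) t :: ih (f t) (hf t ht).2 else [])
  have hcode : ∀ t, code t = if ht : t ∈ S' then g (f t) t :: code (f t) else [] := by
    intro t
    exact wf.fix_eq _ t
  have key : ∀ t, ∀ s, s ∈ S' → t ∈ S' → s < t → code s ≠ code t := by
    intro t
    induction t using WellFounded.induction wf with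
    | _ t ih =>
    intro s hs ht hst heq
    rw [hcode s, hcode t, dif_pos hs, dif_pos ht] at heq
    have h1 : g (f s) s = g (f t) t := by injection heq
    have h2 : code (f s) = code (f t) := by injection heq
    have hfs := hf s hs
    have hft := hf t ht
    rcases eq_or_ne (f s) (f t) with hef | hne
    · exact hg (f t) s ⟨hs, hef⟩ t ⟨ht, rfl⟩ hst (by rw [hef] at h1; exact h1)
    · have hmem1 : f s ∈ Set.Iio t := lt_trans hfs.2 hst
      have hmem2 : f t ∈ Set.Iio t := hft.2
      rcases (hwo t).1 hmem1 hmem2 hne with hle | hle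
      · have hlt2 : f s < f t := lt_of_le_of_ne hle hne
        have hft' : f t ∈ S' := ⟨hft.1, f s, hfs.1, hlt2⟩
        by_cases hfs' : f s ∈ S'
        · exact ih (f t) hft.2 (f s) hfs' hft' hlt2 h2
        · rw [hcode (f s), hcode (f t), dif_neg hfs', dif_pos hft'] at h2
          cases h2
      · have hlt2 : f t < f s := lt_of_le_of_ne hle (Ne.symm hne)
        have hfs' : f s ∈ S' := ⟨hfs.1, f t, hft.1, hlt2⟩
        by_cases hft' : f t ∈ S'
        · exact ih (f s) (lt_trans hfs.2 hst) (f t) hft' hfs' hlt2 h2.symm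
        · rw [hcode (f s), hcode (f t), dif_pos hfs', dif_neg hft'] at h2
          cases h2
  have hS'spec : SpecialOn S' := by
    refine ⟨fun t => Encodable.encode (code t), ?_⟩
    intro s hs t ht hlt heq
    exact key t s hs ht hlt (Encodable.encode_injective heq)
  have hmin : SpecialOn (S \ S') := by
    refine specialOn_empty_or _ ?_
    intro s hsm t htm hlt
    exact htm.2 ⟨htm.1, s, hsm.1, hlt⟩
  refine hS (specialOn_mono ?_ (specialOn_union hS'spec hmin))
  intro x hx
  by_cases h' : x ∈ S'
  · exact Or.inl h'
  · exact Or.inr ⟨hx, h'⟩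

end SpecialIdeal

section CohenAux

variable {ι : Type*}

/-- The support of a Cohen condition. -/
def CohenSupp (p : Cohen ι) : Set (ι × ℕ) := {x | p.1 x ≠ none}

theorem cohenSupp_finite (p : Cohen ι) : (CohenSupp p).Finite := p.2

/-- Compatibility of two Cohen conditions. -/
def CohenCompat (p q : Cohen ι) : Prop :=
  ∀ x a b, p.1 x = some a → q.1 x = some b → a = b

/-- Common extension of two compatible conditions. -/
noncomputable def CohenUnion (p q : Cohen ι) : Cohen ι :=
  ⟨fun x => if p.1 x = none then q.1 x else p.1 x, by
    apply Set.Finite.subset (p.2.union q.2)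
    intro x hx
    simp only [Set.mem_setOf_eq] at hx
    by_cases h : p.1 x = none
    · rw [if_pos h] at hx
      exact Or.inr hx
    · exact Or.inl h⟩

theorem cohenUnion_le_left (p q : Cohen ι) : CohenUnion p q ≤ p := by
  intro x b h
  show (if p.1 x = none then q.1 x else p.1 x) = some b
  rw [if_neg (by rw [h]; simp), h]

theorem cohenUnion_le_right (p q : Cohen ι) (hc : CohenCompat p q) : CohenUnion p q ≤ q := by
  intro x b h
  show (if p.1 x = none then q.1 x else p.1 x) = some b
  by_cases hp : p.1 x = none
  · rw [if_pos hp, h]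
  · rw [if_neg hp]
    obtain ⟨a, ha⟩ := Option.ne_none_iff_exists'.mp hp
    rw [ha, hc x a b ha h]

end CohenAux

section MainLemma

variable {T : Type*} [PartialOrder T] {ι : Type*}

/-- Key lemma: given a nonspecial set `S` and conditions `P t ≤ p'` for `t ∈ S` whose
supports exceed that of `p'` by at most `k` points, two comparable elements of `S`
carry compatible conditions. Proved by induction on `k` using the Pressing Down
Lemma. -/
theorem compat_pair (hwo : ∀ t : T, IsChain (· ≤ ·) (Set.Iio t) ∧ (Set.Iio t).IsWF) :
    ∀ (k : ℕ) (S : Set T) (p' : Cohen ι) (P : T → Cohen ι),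
      ¬ SpecialOn S → (∀ t ∈ S, P t ≤ p') →
      (∀ t ∈ S, (CohenSupp (P t) \ CohenSupp p').ncard ≤ k) →
      ∃ s ∈ S, ∃ t ∈ S, s < t ∧ CohenCompat (P s) (P t) := by
  classical
  intro k
  induction k with
  | zero =>
    intro S p' P hS hle hcard
    -- every `P t` equals `p'`
    have hpt : ∀ t ∈ S, ∀ x, (P t).1 x = p'.1 x := by
      intro t ht x
      rcases h : p'.1 x with _ | b
      · by_contra hne
        have hx : x ∈ CohenSupp (P t) \ CohenSupp p' := by
          constructor
          · simpa [CohenSupp] using hne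
          · simp [CohenSupp, h]
        have hfin : (CohenSupp (P t) \ CohenSupp p').Finite := (cohenSupp_finite _).diff
        have := (Set.ncard_eq_zero hfin).mp (Nat.le_zero.mp (hcard t ht))
        rw [this] at hx
        exact hx
      · exact hle t ht x b h
    by_contra hno
    push_neg at hno
    apply hS
    refine ⟨fun _ => 0, fun s hs t ht hlt _ => ?_⟩
    refine hno s hs t ht hlt ?_
    intro x a b ha hb
    rw [hpt s hs x] at ha
    rw [hpt t ht x] at hb
    rw [ha] at hb
    injection hb
  | succ k ih =>
    intro S p' P hS hle hcard
    by_cases hgoal : ∃ s ∈ S, ∃ t ∈ S, s < t ∧ CohenCompat (P s) (P t)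
    · exact hgoal
    push_neg at hgoal
    exfalso
    -- every comparable pair is incompatible; choose a witness below each nonminimal t
    have hch : ∀ t, (t ∈ S ∧ ∃ s ∈ S, s < t) →
        ∃ s, (s ∈ S ∧ s < t) ∧ ∃ x a b, (P s).1 x = some a ∧ (P t).1 x = some b ∧ a ≠ b := by
      rintro t ⟨ht, s, hsS, hst⟩
      have hnc := hgoal s hsS t ht hst
      unfold CohenCompat at hnc
      push_neg at hnc
      obtain ⟨x, a, b, h1, h2, h3⟩ := hnc
      exact ⟨s, ⟨hsS, hst⟩, x, a, b, h1, h2, h3⟩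
    let f : T → T := fun t => if h : t ∈ S ∧ ∃ s ∈ S, s < t then (hch t h).choose else t
    have hf : ∀ t, (t ∈ S ∧ ∃ s ∈ S, s < t) → f t ∈ S ∧ f t < t := by
      intro t h
      have := ((hch t h).choose_spec).1
      simp only [f, dif_pos h]
      exact this
    have hfx : ∀ t, (h : t ∈ S ∧ ∃ s ∈ S, s < t) →
        ∃ x a b, (P (f t)).1 x = some a ∧ (P t).1 x = some b ∧ a ≠ b := by
      intro t h
      have := ((hch t h).choose_spec).2
      simp only [f, dif_pos h]
      exact this
    -- pressing down: f is constant = u on a nonspecial set S₂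
    obtain ⟨u, hS2⟩ := pdl hwo f hf hS
    set S2 : Set T := {t | (t ∈ S ∧ ∃ s ∈ S, s < t) ∧ f t = u} with hS2def
    obtain ⟨t0, ht0⟩ := nonempty_of_not_specialOn hS2
    have huS : u ∈ S := ht0.2 ▸ (hf t0 ht0.1).1
    -- for t ∈ S₂, a disagreement point with P u inside the finite support of P u
    have hxx : ∀ t, t ∈ S2 →
        ∃ x, x ∈ CohenSupp (P u) ∧ ∃ b, (P t).1 x = some b ∧ (P u).1 x ≠ some b := by
      intro t ht
      obtain ⟨x, a, b, h1, h2, h3⟩ := hfx t ht.1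
      rw [ht.2] at h1
      refine ⟨x, by simp [CohenSupp, h1], b, h2, ?_⟩
      rw [h1]
      intro hc
      exact h3 (by injection hc)
    -- injective coloring of the finite support of P u
    obtain ⟨fi, hfi⟩ := Set.countable_iff_exists_injective.mp (cohenSupp_finite (P u)).countable
    let F : ι × ℕ → ℕ := fun x => if h : x ∈ CohenSupp (P u) then fi ⟨x, h⟩ else 0
    let c : T → ℕ := fun t => if h : t ∈ S2 then F (hxx t h).choose else 0
    obtain ⟨n, hS3⟩ := pigeonhole_nonspecial hS2 c
    set S3 : Set T := {t | t ∈ S2 ∧ c t = n} with hS3def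
    obtain ⟨t3, ht3⟩ := nonempty_of_not_specialOn hS3
    set x0 : ι × ℕ := (hxx t3 ht3.1).choose with hx0def
    obtain ⟨hx0supp, b3, hb3, hb3ne⟩ := (hxx t3 ht3.1).choose_spec
    rw [← hx0def] at hx0supp hb3 hb3ne
    obtain ⟨a, ha⟩ := Option.ne_none_iff_exists'.mp hx0supp
    -- all t ∈ S₃ disagree with P u at the same point x0, with the same value !a
    have hsame : ∀ t ∈ S3, (P t).1 x0 = some (!a) := by
      intro t ht
      obtain ⟨hxsupp, b, hb, hbne⟩ := (hxx t ht.1).choose_spec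
      have hcx : c t = c t3 := by rw [ht.2, ht3.2]
      have hx_eq : (hxx t ht.1).choose = x0 := by
        have hFF : F (hxx t ht.1).choose = F (hxx t3 ht3.1).choose := by
          simpa [c, dif_pos ht.1, dif_pos ht3.1] using hcx
        rw [← hx0def] at hFF
        simp only [F, dif_pos hxsupp, dif_pos hx0supp] at hFF
        exact congrArg Subtype.val (hfi hFF)
      rw [hx_eq] at hb hbne
      rw [ha] at hbne
      have : b ≠ a := fun h => hbne (by rw [h])
      have hb' : b = !a := by
        cases a <;> cases b <;> simp_all
      rw [hb'] at hb
      exact hb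
    -- x0 is outside the support of p'
    have hx0notp' : p'.1 x0 = none := by
      rcases h : p'.1 x0 with _ | cc
      · rfl
      · exfalso
        have h1 : (P u).1 x0 = some cc := hle u huS x0 cc h
        have h2 : (P t3).1 x0 = some cc :=
          hle t3 ht3.1.1.1 x0 cc h
        rw [ha] at h1
        have hac : a = cc := by injection h1
        have := hsame t3 ht3
        rw [h2] at this
        have : cc = !a := by injection this
        rw [hac] at this
        simp at this
    -- the extended base condition
    let p'' : Cohen ι := ⟨fun y => if y = x0 then some (!a) else p'.1 y, by
      apply Set.Finite.subset (p'.2.union (Set.finite_singleton x0))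
      intro y hy
      simp only [Set.mem_setOf_eq] at hy
      by_cases h : y = x0
      · exact Or.inr h
      · rw [if_neg h] at hy
        exact Or.inl hy⟩
    have hle'' : ∀ t ∈ S3, P t ≤ p'' := by
      intro t ht y b hb
      have hb' : (if y = x0 then some (!a) else p'.1 y) = some b := hb
      show (P t).1 y = some b
      by_cases h : y = x0
      · rw [if_pos h] at hb'
        have hba : (!a) = b := by injection hb'
        rw [h, ← hba]
        exact hsame t ht
      · rw [if_neg h] at hb'
        exact hle t ht.1.1.1 y b hb'
    have hsupp'' : CohenSupp p'' = CohenSupp p' ∪ {x0} := by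
      ext y
      show ¬(if y = x0 then some (!a) else p'.1 y) = none ↔ _
      simp only [Set.mem_union, Set.mem_singleton_iff]
      by_cases h : y = x0
      · simp [h]
      · simp [h, CohenSupp]
    have hcard'' : ∀ t ∈ S3, (CohenSupp (P t) \ CohenSupp p'').ncard ≤ k := by
      intro t ht
      have hx0mem : x0 ∈ CohenSupp (P t) \ CohenSupp p' := by
        constructor
        · simp [CohenSupp, hsame t ht]
        · simp [CohenSupp, hx0notp']
      have heq : CohenSupp (P t) \ CohenSupp p'' =
          (CohenSupp (P t) \ CohenSupp p') \ {x0} := by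
        rw [hsupp'']
        ext y
        simp only [Set.mem_diff, Set.mem_union, Set.mem_singleton_iff]
        tauto
      rw [heq]
      have hfin : (CohenSupp (P t) \ CohenSupp p').Finite := (cohenSupp_finite _).diff
      rw [Set.ncard_diff_singleton_of_mem hx0mem]
      have := hcard t ht.1.1.1
      omega
    obtain ⟨s, hs, t, ht, hlt, hcompat⟩ := ih S3 p'' P hS3 hle'' hcard''
    exact hgoal s hs.1.1.1 t ht.1.1.1 hlt hcompat

end MainLemma

/-- Cohen forcing cannot specialize a nonspecial tree. If `T` is a
nonspecial tree of height `ω₁` and `λ` is any cardinal (index set `ι`), then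
`Add(ω, λ)` forces that `T` is nonspecial: no condition `p₀` forces a name `ġ` for a
specializing function (the name given by `R : T → ℕ → Set (Cohen ι)`, where
`p ∈ R t n` means "`p ⊩ ġ(t) = n`", persistent, single-valued, densely decided below
`p₀`): some condition below `p₀` forces equal values on two comparable nodes. -/
theorem stmt_13 {T : Type*} [PartialOrder T] (ι : Type*)
    (hwo : ∀ t : T, IsChain (· ≤ ·) (Set.Iio t) ∧ (Set.Iio t).IsWF)
    (hct : ∀ t : T, (Set.Iio t).Countable)
    (hns : ¬∃ g : T → ℕ, ∀ s t : T, s < t → g s ≠ g t) :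
    ∀ (p₀ : Cohen ι) (R : T → ℕ → Set (Cohen ι)),
      (∀ (t : T) (n : ℕ) (p q : Cohen ι), q ≤ p → p ∈ R t n → q ∈ R t n) →
      (∀ (t : T) (n m : ℕ) (p : Cohen ι), p ∈ R t n → p ∈ R t m → n = m) →
      (∀ (t : T) (p : Cohen ι), p ≤ p₀ → ∃ q ≤ p, ∃ n, q ∈ R t n) →
      ∃ (s t : T) (n : ℕ) (p : Cohen ι), s < t ∧ p ≤ p₀ ∧ p ∈ R s n ∧ p ∈ R t n := by
  classical
  intro p₀ R hper _hsv hden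
  have hnspec : ¬ SpecialOn (Set.univ : Set T) := by
    rintro ⟨g, hg⟩
    exact hns ⟨g, fun s t hst => hg s trivial t trivial hst⟩
  have hPt : ∀ t : T, ∃ q : Cohen ι, q ≤ p₀ ∧ ∃ n, q ∈ R t n := by
    intro t
    obtain ⟨q, hq, n, hn⟩ := hden t p₀ (le_refl p₀)
    exact ⟨q, hq, n, hn⟩
  choose P hPle N hPR using hPt
  obtain ⟨m, hSm⟩ := pigeonhole_nonspecial hnspec
    (fun t => Nat.pair (N t) ((CohenSupp (P t) \ CohenSupp p₀).ncard))
  set S : Set T :=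
    {t | t ∈ Set.univ ∧
      Nat.pair (N t) ((CohenSupp (P t) \ CohenSupp p₀).ncard) = m} with hSdef
  obtain ⟨t1, ht1⟩ := nonempty_of_not_specialOn hSm
  have hconst : ∀ t ∈ S, N t = N t1 ∧
      (CohenSupp (P t) \ CohenSupp p₀).ncard = (CohenSupp (P t1) \ CohenSupp p₀).ncard := by
    intro t ht
    have := ht.2.trans ht1.2.symm
    exact Nat.pair_eq_pair.mp this
  obtain ⟨s, hs, t, ht, hlt, hcompat⟩ :=
    compat_pair hwo ((CohenSupp (P t1) \ CohenSupp p₀).ncard) S p₀ P hSm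
      (fun t ht => hPle t) (fun t ht => le_of_eq (hconst t ht).2)
  refine ⟨s, t, N t1, CohenUnion (P s) (P t), hlt, ?_, ?_, ?_⟩
  · exact le_trans (cohenUnion_le_left (P s) (P t)) (hPle s)
  · have := hPR s
    rw [(hconst s hs).1] at this
    exact hper s (N t1) (P s) _ (cohenUnion_le_left (P s) (P t)) this
  · have := hPR t
    rw [(hconst t ht).1] at this
    exact hper t (N t1) (P t) _ (cohenUnion_le_right (P s) (P t) hcompat) this
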